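/- arXiv:1010.0703 — 3 statements merged into one kernel-verified Lean document; each statement's English description precedes it below -/
import Mathlib

section
/- Let F be a strictly convex, differentiable, rotationally invariant function on symmetric positive semidefinite matrices, let L be a symmetric matrix, and let η > 0. If X* satisfies: (1) X* = (∇F)^{-1}(η(λ*I − L)) for some real λ*, (2) Tr(X*) = 1, and (3) X* ⪰ 0, then X* is an optimal solution of the problem min { L•X + (1/η)F(X) : Tr(X) = 1, X ⪰ 0 }. -/
open Matrix

attribute [local instance] Matrix.frobeniusNormedAddCommGroup Matrix.frobeniusNormedSpace

lemma dir_deriv_le {E : Type*} [NormedAddCommGroup E] [NormedSpace ℝ E]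
    (f : E → ℝ) (f' : E →L[ℝ] ℝ) (x y : E) (hd : HasFDerivAt f f' x)
    (hcvx : ∀ t ∈ Set.Ioo (0:ℝ) 1, f (x + t • (y - x)) ≤ (1-t) * f x + t * f y) :
    f' (y - x) ≤ f y - f x := by
  set g : ℝ → ℝ := fun t => f (x + t • (y - x)) with hg
  have hline : HasDerivAt (fun t : ℝ => x + t • (y - x)) (y - x) 0 := by
    have := ((hasDerivAt_id (0:ℝ)).smul_const (y - x)).const_add x
    simpa using this
  have hgd : HasDerivAt g (f' (y - x)) 0 := by
    have hd' : HasFDerivAt f f' ((fun t : ℝ => x + t • (y - x)) 0) := by simpa using hd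
    exact hd'.comp_hasDerivAt 0 hline
  have htend : Filter.Tendsto (slope g 0) (nhdsWithin 0 (Set.Ioi 0))
      (nhds (f' (y - x))) :=
    (hasDerivAt_iff_tendsto_slope.mp hgd).mono_left
      (nhdsWithin_mono _ (fun t ht => ne_of_gt ht))
  refine le_of_tendsto htend ?_
  filter_upwards [Ioo_mem_nhdsGT_of_mem (Set.mem_Ico.mpr ⟨le_refl 0, one_pos⟩)] with t ht
  have h1 := hcvx t ht
  have ht0 : 0 < t := ht.1
  have hg0 : g 0 = f x := by simp [hg]
  have hslope : slope g 0 t = (g t - f x) / t := by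
    rw [slope_def_field, hg0]; ring_nf
  rw [hslope, div_le_iff₀ ht0]
  nlinarith [h1]

/-- The structural theorem: sufficient conditions for `Xstar` to be an optimal
solution of the regularized SDP `min { L•X + (1/η) F(X) : Tr X = 1, X ⪰ 0 }`. -/
theorem regularized_sdp_optimality
    {n : ℕ} (L : Matrix (Fin n) (Fin n) ℝ) (hL : L.IsSymm)
    (F : Matrix (Fin n) (Fin n) ℝ → ℝ)
    -- F is strictly convex on the positive semidefinite cone
    (hFconv : ∀ X Y : Matrix (Fin n) (Fin n) ℝ, X.PosSemidef → Y.PosSemidef → X ≠ Y →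
      ∀ a b : ℝ, 0 < a → 0 < b → a + b = 1 →
        F (a • X + b • Y) < a * F X + b * F Y)
    -- F is rotationally invariant
    (hFrot : ∀ (U X : Matrix (Fin n) (Fin n) ℝ), U * Uᵀ = 1 → F (U * X * Uᵀ) = F X)
    -- F is differentiable on the positive semidefinite cone, with gradient `gradF`
    -- with respect to the trace inner product
    (gradF : Matrix (Fin n) (Fin n) ℝ → Matrix (Fin n) (Fin n) ℝ)
    (hFgrad : ∀ X : Matrix (Fin n) (Fin n) ℝ, X.PosSemidef →
      HasFDerivAt F
        (LinearMap.toContinuousLinearMap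
          ((Matrix.traceLinearMap (Fin n) ℝ ℝ).comp (LinearMap.mulLeft ℝ (gradF X)))) X)
    (η : ℝ) (hη : 0 < η)
    (Xstar : Matrix (Fin n) (Fin n) ℝ) (lamStar : ℝ)
    -- condition (1): Xstar = (∇F)⁻¹ (η (λ* I − L))
    (h1 : gradF Xstar = η • (lamStar • (1 : Matrix (Fin n) (Fin n) ℝ) - L))
    -- condition (2): Tr(Xstar) = 1
    (h2 : Xstar.trace = 1)
    -- condition (3): Xstar ⪰ 0
    (h3 : Xstar.PosSemidef) :
    ∀ Y : Matrix (Fin n) (Fin n) ℝ, Y.PosSemidef → Y.trace = 1 →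
      (L * Xstar).trace + (1 / η) * F Xstar ≤ (L * Y).trace + (1 / η) * F Y := by
  intro Y hY hYtr
  by_cases hne : Xstar = Y
  · rw [hne]
  have hkey : ((gradF Xstar) * (Y - Xstar)).trace ≤ F Y - F Xstar := by
    have := dir_deriv_le F _ Xstar Y (hFgrad Xstar h3) ?_
    · exact this
    · intro t ht
      have heq : Xstar + t • (Y - Xstar) = (1-t) • Xstar + t • Y := by
        module
      rw [heq]
      exact le_of_lt (hFconv Xstar Y h3 hY hne (1-t) t (by linarith [ht.2]) ht.1 (by ring))
  have hcompute : ((gradF Xstar) * (Y - Xstar)).trace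
      = η * ((L * Xstar).trace - (L * Y).trace) := by
    rw [h1]
    simp [Matrix.smul_mul, Matrix.sub_mul, Matrix.mul_sub, Matrix.trace_sub,
      Matrix.trace_smul, h2, hYtr]
  rw [hcompute] at hkey
  have h1η : (1/η) * (η * ((L * Xstar).trace - (L * Y).trace)) ≤ (1/η) * (F Y - F Xstar) := by
    apply mul_le_mul_of_nonneg_left hkey (by positivity)
  rw [one_div, inv_mul_cancel_left₀ (ne_of_gt hη), mul_sub] at h1η
  simp only [one_div]
  linarith
end

section
/- Let L be a real symmetric matrix with largest eigenvalue λ_max, let p > 1 with conjugate exponent q (1/p + 1/q = 1) such that q − 1 is a positive integer, let λ > λ_max, and set η so that η^{q−1} Tr((λI − L)^{q−1}) = 1. Then X* = η^{q−1}(λI − L)^{q−1} is an optimal solution of min { L•X + (1/(pη)) Tr(X^p) : Tr(X) = 1, X ⪰ 0 }. -/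
open Matrix

section helpers

variable {n : ℕ}

lemma conj_cancel {U : Matrix (Fin n) (Fin n) ℝ} (hU' : Uᴴ * U = 1)
    (X : Matrix (Fin n) (Fin n) ℝ) : Uᴴ * (U * X) = X := by
  rw [← mul_assoc, hU', one_mul]

lemma conj_mul_conj {U : Matrix (Fin n) (Fin n) ℝ} (hU' : Uᴴ * U = 1)
    (A B : Matrix (Fin n) (Fin n) ℝ) :
    (U * A * Uᴴ) * (U * B * Uᴴ) = U * (A * B) * Uᴴ := by
  simp only [Matrix.mul_assoc, conj_cancel hU']

lemma myConjPow {U : Matrix (Fin n) (Fin n) ℝ} (hU : U * Uᴴ = 1) (hU' : Uᴴ * U = 1)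
    (A : Matrix (Fin n) (Fin n) ℝ) (m : ℕ) :
    (U * A * Uᴴ) ^ m = U * A ^ m * Uᴴ := by
  induction m with
  | zero => rw [pow_zero, pow_zero, mul_one, hU]
  | succ m ih => rw [pow_succ, ih, conj_mul_conj hU', ← pow_succ]

lemma trace_conj {U : Matrix (Fin n) (Fin n) ℝ} (hU' : Uᴴ * U = 1)
    (A : Matrix (Fin n) (Fin n) ℝ) : (U * A * Uᴴ).trace = A.trace := by
  rw [trace_mul_cycle, hU', one_mul]

lemma det_conj' {U : Matrix (Fin n) (Fin n) ℝ} (hU : U * Uᴴ = 1)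
    (A : Matrix (Fin n) (Fin n) ℝ) : (U * A * Uᴴ).det = A.det := by
  have h1 : U.det * Uᴴ.det = 1 := by rw [← det_mul, hU, det_one]
  rw [det_mul, det_mul]
  calc U.det * A.det * Uᴴ.det = (U.det * Uᴴ.det) * A.det := by ring
  _ = A.det := by rw [h1, one_mul]

end helpers

section two

variable {n : ℕ}

lemma conj_diag_sub {W : Matrix (Fin n) (Fin n) ℝ} (hW : W * Wᴴ = 1)
    (f : Fin n → ℝ) (x : ℝ) :
    x • (1 : Matrix (Fin n) (Fin n) ℝ) - W * diagonal f * Wᴴ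
      = W * diagonal (fun i => x - f i) * Wᴴ := by
  have : (diagonal (fun i => x - f i) : Matrix (Fin n) (Fin n) ℝ)
      = x • 1 - diagonal f := by
    rw [smul_one_eq_diagonal, ← diagonal_sub]
  simp only [this, Matrix.mul_sub, Matrix.sub_mul, Matrix.mul_smul, Matrix.smul_mul,
    Matrix.mul_one, hW]

lemma eig_multiset {U V : Matrix (Fin n) (Fin n) ℝ} (hU : U * Uᴴ = 1) (hV : V * Vᴴ = 1)
    (d e : Fin n → ℝ) (h : U * diagonal d * Uᴴ = V * diagonal e * Vᴴ) :
    Multiset.map d Finset.univ.val = Multiset.map e Finset.univ.val := by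
  have key : ∀ x : ℝ, ∏ i, (x - d i) = ∏ i, (x - e i) := by
    intro x
    have h1 := congrArg (fun A => (x • (1 : Matrix (Fin n) (Fin n) ℝ) - A).det) h
    simp only [conj_diag_sub hU, conj_diag_sub hV, det_conj' hU, det_conj' hV,
      det_diagonal] at h1
    exact h1
  have hpoly : (∏ i, (Polynomial.X - Polynomial.C (d i)))
      = ∏ i, (Polynomial.X - Polynomial.C (e i)) := by
    apply Polynomial.funext
    intro x
    simpa [Polynomial.eval_prod] using key x
  have hform : ∀ f : Fin n → ℝ, (∏ i, (Polynomial.X - Polynomial.C (f i)))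
      = ((Finset.univ.val.map f).map fun a => Polynomial.X - Polynomial.C a).prod := by
    intro f
    rw [Multiset.map_map]
    rfl
  calc Multiset.map d Finset.univ.val
      = (((Finset.univ.val.map d).map fun a => Polynomial.X - Polynomial.C a)).prod.roots := by
        rw [Polynomial.roots_multiset_prod_X_sub_C]
    _ = (((Finset.univ.val.map e).map fun a => Polynomial.X - Polynomial.C a)).prod.roots := by
        rw [← hform, ← hform, hpoly]
    _ = Multiset.map e Finset.univ.val := Polynomial.roots_multiset_prod_X_sub_C _

lemma trace_young {p q : ℝ} (hpq : p.HolderConjugate q)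
    {U V : Matrix (Fin n) (Fin n) ℝ}
    (hU : U * Uᴴ = 1) (hU' : Uᴴ * U = 1) (hV : V * Vᴴ = 1) (hV' : Vᴴ * V = 1)
    (b ν : Fin n → ℝ) (hb : ∀ i, 0 ≤ b i) (hν : ∀ i, 0 ≤ ν i) :
    ((U * diagonal b * Uᴴ) * (V * diagonal ν * Vᴴ)).trace
      ≤ (∑ i, b i ^ q) / q + (∑ i, ν i ^ p) / p := by
  set W : Matrix (Fin n) (Fin n) ℝ := Uᴴ * V with hWdef
  have hWH : Wᴴ = Vᴴ * U := by
    rw [hWdef, conjTranspose_mul, conjTranspose_conjTranspose]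
  have hW : W * Wᴴ = 1 := by
    rw [hWdef, hWH, Matrix.mul_assoc, ← Matrix.mul_assoc V, hV, Matrix.one_mul, hU']
  have hW' : Wᴴ * W = 1 := by
    rw [hWdef, hWH, Matrix.mul_assoc, ← Matrix.mul_assoc U, hU, Matrix.one_mul, hV']
  have rowsum : ∀ i, ∑ j, (W i j) ^ 2 = 1 := by
    intro i
    have h1 := congrArg (fun A => A i i) hW
    simp only [Matrix.mul_apply, Matrix.conjTranspose_apply, Matrix.one_apply_eq,
      star_trivial] at h1
    simpa [pow_two] using h1
  have colsum : ∀ j, ∑ i, (W i j) ^ 2 = 1 := by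
    intro j
    have h1 := congrArg (fun A => A j j) hW'
    simp only [Matrix.mul_apply, Matrix.conjTranspose_apply, Matrix.one_apply_eq,
      star_trivial] at h1
    simpa [pow_two] using h1
  have hmat : (U * diagonal b * Uᴴ) * (V * diagonal ν * Vᴴ)
      = U * (diagonal b * W * diagonal ν * Wᴴ) * Uᴴ := by
    rw [hWdef, hWH]
    simp only [Matrix.mul_assoc, hU, Matrix.mul_one]
  have htr : ((U * diagonal b * Uᴴ) * (V * diagonal ν * Vᴴ)).trace
      = ∑ i, ∑ j, (W i j) ^ 2 * (ν j * b i) := by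
    rw [hmat, trace_conj hU']
    rw [Matrix.trace]
    refine Finset.sum_congr rfl fun i _ => ?_
    simp only [Matrix.diag_apply, Matrix.mul_apply, Matrix.diagonal_apply,
      Matrix.conjTranspose_apply, star_trivial, Finset.sum_ite_eq, Finset.mem_univ,
      if_true, ite_mul, zero_mul, mul_ite, mul_zero, Finset.sum_ite_eq']
    refine Finset.sum_congr rfl fun j _ => ?_
    ring
  rw [htr]
  have hbound : ∀ i j, (W i j) ^ 2 * (ν j * b i)
      ≤ (W i j) ^ 2 * (ν j ^ p / p + b i ^ q / q) := fun i j =>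
    mul_le_mul_of_nonneg_left (Real.young_inequality_of_nonneg (hν j) (hb i) hpq)
      (sq_nonneg _)
  calc ∑ i, ∑ j, (W i j) ^ 2 * (ν j * b i)
      ≤ ∑ i, ∑ j, (W i j) ^ 2 * (ν j ^ p / p + b i ^ q / q) :=
        Finset.sum_le_sum fun i _ => Finset.sum_le_sum fun j _ => hbound i j
    _ = (∑ i, b i ^ q) / q + (∑ i, ν i ^ p) / p := by
        simp only [mul_add, Finset.sum_add_distrib]
        have A1 : ∑ i, ∑ j, (W i j) ^ 2 * (ν j ^ p / p) = ∑ j, ν j ^ p / p := by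
          rw [Finset.sum_comm]
          refine Finset.sum_congr rfl fun j _ => ?_
          rw [← Finset.sum_mul, colsum j, one_mul]
        have A2 : ∑ i, ∑ j, (W i j) ^ 2 * (b i ^ q / q) = ∑ i, b i ^ q / q := by
          refine Finset.sum_congr rfl fun i _ => ?_
          rw [← Finset.sum_mul, rowsum i, one_mul]
        rw [A1, A2, ← Finset.sum_div, ← Finset.sum_div]
        ring

end two

lemma myDiagPow {n : ℕ} (f : Fin n → ℝ) (m : ℕ) :
    (diagonal f) ^ m = diagonal (fun i => f i ^ m) := by
  induction m with
  | zero => simp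
  | succ m ih =>
      rw [pow_succ, ih, diagonal_mul_diagonal]
      congr 1

/-- `Tr(X^p)` for real `p`, defined spectrally on (hermitian) positive
semidefinite matrices. -/
noncomputable def tracePowR {n : ℕ} (p : ℝ) (X : Matrix (Fin n) (Fin n) ℝ) : ℝ :=
  if hX : X.IsHermitian then ∑ i, (hX.eigenvalues i) ^ p else 0

/-- For symmetric `L`, `p > 1` with conjugate exponent `q` such that `q − 1 = k`
is a positive integer, `λ` above the largest eigenvalue of `L`, and `η` with
`η^{q−1} Tr((λI − L)^{q−1}) = 1`, the matrix `X* = η^{q−1}(λI − L)^{q−1}` is an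
optimal solution of `min { L•X + (1/(pη)) Tr(X^p) : Tr X = 1, X ⪰ 0 }`. -/
theorem p_norm_regularization_optimum
    {n : ℕ} (L : Matrix (Fin n) (Fin n) ℝ) (hL : L.IsSymm) (hLh : L.IsHermitian)
    (p q : ℝ) (hp : 1 < p) (hpq : 1 / p + 1 / q = 1)
    (k : ℕ) (hk : 0 < k) (hq : q - 1 = (k : ℝ))
    (lam : ℝ) (hlam : ∀ i, hLh.eigenvalues i < lam)
    (η : ℝ) (hη : 0 < η)
    (hnorm : η ^ k * ((lam • (1 : Matrix (Fin n) (Fin n) ℝ) - L) ^ k).trace = 1)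
    (Xstar : Matrix (Fin n) (Fin n) ℝ)
    (hXstar : Xstar = η ^ k • (lam • (1 : Matrix (Fin n) (Fin n) ℝ) - L) ^ k) :
    Xstar.PosSemidef ∧ Xstar.trace = 1 ∧
      ∀ Y : Matrix (Fin n) (Fin n) ℝ, Y.PosSemidef → Y.trace = 1 →
        (L * Xstar).trace + (1 / (p * η)) * tracePowR p Xstar
          ≤ (L * Y).trace + (1 / (p * η)) * tracePowR p Y := by
  classical
  have hp0 : (0:ℝ) < p := lt_trans one_pos hp
  have hq1 : q = (k:ℝ) + 1 := by linarith
  have hq0 : (0:ℝ) < q := by rw [hq1]; positivity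
  have hpq' : p.HolderConjugate q := Real.holderConjugate_iff.mpr ⟨hp, by simpa [one_div] using hpq⟩
  have hpq2 : q + p = p * q := by
    have hpn : p ≠ 0 := ne_of_gt hp0
    have hqn : q ≠ 0 := ne_of_gt hq0
    field_simp at hpq
    linarith
  have hkp : (k:ℝ) * p = q := by
    have hk' : (k:ℝ) = q - 1 := by linarith
    rw [hk']
    linear_combination -hpq2
  -- spectral data of L
  set U : Matrix (Fin n) (Fin n) ℝ := (hLh.eigenvectorUnitary : Matrix (Fin n) (Fin n) ℝ)
    with hUdef
  have hU : U * Uᴴ = 1 := by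
    rw [← Matrix.star_eq_conjTranspose]
    exact Matrix.mem_unitaryGroup_iff.mp hLh.eigenvectorUnitary.2
  have hU' : Uᴴ * U = 1 := by
    rw [← Matrix.star_eq_conjTranspose]
    exact Matrix.mem_unitaryGroup_iff'.mp hLh.eigenvectorUnitary.2
  have hsp : L = U * diagonal hLh.eigenvalues * Uᴴ := by
    have h := hLh.spectral_theorem
    simpa [RCLike.ofReal_real_eq_id, Function.id_comp,
      Matrix.star_eq_conjTranspose] using h
  set μ : Fin n → ℝ := fun i => lam - hLh.eigenvalues i with hμdef
  have hμ : ∀ i, 0 < μ i := fun i => sub_pos.mpr (hlam i)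
  have hM : lam • (1 : Matrix (Fin n) (Fin n) ℝ) - L = U * diagonal μ * Uᴴ := by
    conv_lhs => rw [hsp]
    exact conj_diag_sub hU hLh.eigenvalues lam
  set d : Fin n → ℝ := fun i => η ^ k * μ i ^ k with hddef
  have hd0 : ∀ i, 0 ≤ d i := fun i => by
    have := hμ i
    have := hη
    positivity
  have hXd : Xstar = U * diagonal d * Uᴴ := by
    rw [hXstar, hM, myConjPow hU hU', myDiagPow]
    have hds : diagonal d = (η ^ k : ℝ) • diagonal (fun i => μ i ^ k) := by
      rw [← Matrix.diagonal_smul]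
      congr 1
    rw [hds, Matrix.mul_smul, Matrix.smul_mul]
  have hXpsd : Xstar.PosSemidef := by
    rw [hXd]
    exact (posSemidef_diagonal_iff.mpr hd0).mul_mul_conjTranspose_same U
  have hXtr : Xstar.trace = 1 := by
    rw [hXstar, trace_smul, smul_eq_mul]
    exact hnorm
  refine ⟨hXpsd, hXtr, ?_⟩
  intro Y hY hYt
  -- eigenvalues of Xstar
  have hXh : Xstar.IsHermitian := hXpsd.1
  set V : Matrix (Fin n) (Fin n) ℝ := (hXh.eigenvectorUnitary : Matrix (Fin n) (Fin n) ℝ)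
    with hVdef
  have hV : V * Vᴴ = 1 := by
    rw [← Matrix.star_eq_conjTranspose]
    exact Matrix.mem_unitaryGroup_iff.mp hXh.eigenvectorUnitary.2
  have hspX : Xstar = V * diagonal hXh.eigenvalues * Vᴴ := by
    have h := hXh.spectral_theorem
    simpa [RCLike.ofReal_real_eq_id, Function.id_comp,
      Matrix.star_eq_conjTranspose] using h
  set e : Fin n → ℝ := hXh.eigenvalues with hedef
  have hms : Multiset.map d Finset.univ.val = Multiset.map e Finset.univ.val :=
    eig_multiset hU hV d e (by rw [← hXd, hspX])
  set S : ℝ := ∑ i, (η * μ i) ^ (k + 1) with hSdef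
  have hdp : ∀ i, d i ^ p = (η * μ i) ^ (k + 1) := by
    intro i
    have hx : (0:ℝ) ≤ η * μ i := le_of_lt (mul_pos hη (hμ i))
    calc d i ^ p = ((η * μ i) ^ k : ℝ) ^ p := by rw [hddef]; rw [mul_pow]
      _ = ((η * μ i) ^ ((k:ℕ):ℝ)) ^ p := by rw [Real.rpow_natCast]
      _ = (η * μ i) ^ (((k:ℕ):ℝ) * p) := by rw [← Real.rpow_mul hx]
      _ = (η * μ i) ^ (((k+1:ℕ):ℝ)) := by rw [hkp, hq1]; norm_num
      _ = (η * μ i) ^ (k + 1) := Real.rpow_natCast _ _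
  set b : Fin n → ℝ := fun i => η * μ i with hbdef
  have hb0 : ∀ i, 0 ≤ b i := fun i => le_of_lt (mul_pos hη (hμ i))
  have hbq : ∀ i, b i ^ q = (η * μ i) ^ (k + 1) := by
    intro i
    calc b i ^ q = ((η * μ i) : ℝ) ^ (((k+1:ℕ):ℝ)) := by
          simp only [hbdef]
          rw [hq1]
          norm_num
      _ = (η * μ i) ^ (k + 1) := Real.rpow_natCast _ _
  have hSb : ∑ i, b i ^ q = S := by
    rw [hSdef]
    exact Finset.sum_congr rfl fun i _ => hbq i
  -- tracePowR p Xstar = S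
  have htrX : tracePowR p Xstar = S := by
    simp only [tracePowR]
    rw [dif_pos hXh]
    calc ∑ i, e i ^ p
        = ((Finset.univ.val.map e).map (fun x : ℝ => x ^ p)).sum := by
          rw [Multiset.map_map]
          rfl
      _ = ((Finset.univ.val.map d).map (fun x : ℝ => x ^ p)).sum := by rw [hms]
      _ = ∑ i, d i ^ p := by
          rw [Multiset.map_map]
          rfl
      _ = S := by
          rw [hSdef]
          exact Finset.sum_congr rfl fun i _ => hdp i
  -- the matrix P = η • (lam • 1 - L)
  set P : Matrix (Fin n) (Fin n) ℝ := η • (lam • (1 : Matrix (Fin n) (Fin n) ℝ) - L)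
    with hPdef
  have hPU : P = U * diagonal b * Uᴴ := by
    rw [hPdef, hM]
    have hbs : diagonal b = (η : ℝ) • diagonal μ := by
      rw [← Matrix.diagonal_smul]
      congr 1
    rw [hbs, Matrix.mul_smul, Matrix.smul_mul]
  have keyZ : ∀ Z : Matrix (Fin n) (Fin n) ℝ, Z.trace = 1 →
      (L * Z).trace = lam - (P * Z).trace / η := by
    intro Z hZ
    have h1 : P * Z = η • (lam • Z - L * Z) := by
      rw [hPdef, Matrix.smul_mul, Matrix.sub_mul, Matrix.smul_mul, Matrix.one_mul]
    rw [h1, trace_smul, trace_sub, trace_smul, hZ, smul_eq_mul, smul_eq_mul, mul_one]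
    field_simp
    ring
  -- trace (P * Xstar) = S
  have hPX : (P * Xstar).trace = S := by
    rw [hPU, hXd, conj_mul_conj hU', diagonal_mul_diagonal, trace_conj hU',
      trace_diagonal, hSdef]
    refine Finset.sum_congr rfl fun i _ => ?_
    simp only [Pi.mul_apply, hbdef, hddef]
    rw [pow_succ', mul_pow]
  -- spectral data of Y
  have hYh : Y.IsHermitian := hY.1
  set VY : Matrix (Fin n) (Fin n) ℝ := (hYh.eigenvectorUnitary : Matrix (Fin n) (Fin n) ℝ)
    with hVYdef
  have hVY : VY * VYᴴ = 1 := by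
    rw [← Matrix.star_eq_conjTranspose]
    exact Matrix.mem_unitaryGroup_iff.mp hYh.eigenvectorUnitary.2
  have hVY' : VYᴴ * VY = 1 := by
    rw [← Matrix.star_eq_conjTranspose]
    exact Matrix.mem_unitaryGroup_iff'.mp hYh.eigenvectorUnitary.2
  have hspY : Y = VY * diagonal hYh.eigenvalues * VYᴴ := by
    have h := hYh.spectral_theorem
    simpa [RCLike.ofReal_real_eq_id, Function.id_comp,
      Matrix.star_eq_conjTranspose] using h
  set ν : Fin n → ℝ := hYh.eigenvalues with hνdef
  have hν0 : ∀ i, 0 ≤ ν i := fun i => hY.eigenvalues_nonneg i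
  set Tp : ℝ := ∑ i, ν i ^ p with hTpdef
  have htrY : tracePowR p Y = Tp := by
    simp only [tracePowR]
    rw [dif_pos hYh, hTpdef]
  -- Young's inequality
  have hyoung : (P * Y).trace ≤ S / q + Tp / p := by
    calc (P * Y).trace = ((U * diagonal b * Uᴴ) * (VY * diagonal ν * VYᴴ)).trace := by
          rw [← hPU, ← hspY]
      _ ≤ (∑ i, b i ^ q) / q + (∑ i, ν i ^ p) / p :=
          trace_young hpq' hU hU' hVY hVY' b ν hb0 hν0
      _ = S / q + Tp / p := by rw [hSb, hTpdef]
  -- final arithmetic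
  rw [htrX, htrY, keyZ Xstar hXtr, keyZ Y hYt, hPX]
  have hsum1 : S / q + S / p = S := by
    have h2 : S / q + S / p = S * (1 / p + 1 / q) := by ring
    rw [h2, hpq, mul_one]
  have h7 : (P * Y).trace / η ≤ (S / q + Tp / p) / η := by gcongr
  have E2 : lam - (S / q + S / p) / η + 1 / (p * η) * S
      = lam - (S / q + Tp / p) / η + 1 / (p * η) * Tp := by
    field_simp
    ring
  calc lam - S / η + 1 / (p * η) * S
      = lam - (S / q + Tp / p) / η + 1 / (p * η) * Tp := by rw [← E2, hsum1]
    _ ≤ lam - (P * Y).trace / η + 1 / (p * η) * Tp := by linarith [h7]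
end

section
/- Let L = I − D^{-1/2}AD^{-1/2} be the normalized Laplacian of a connected weighted graph, and let λ < 0, η > 0 satisfy η = (1−γ)Tr((I − (1−γ)AD^{-1})^{-1}) where γ = λ/(λ−1). Then (1/η)(L − λI)^{-1} = D^{-1/2} R_γ D^{1/2} / Tr(R_γ), where R_γ = γ(I − (1−γ)AD^{-1})^{-1}. -/
open Matrix

private lemma matrix_smul_inv {n : ℕ} (k : ℝ) (hk : k ≠ 0)
    (A : Matrix (Fin n) (Fin n) ℝ) : (k • A)⁻¹ = k⁻¹ • A⁻¹ := by
  have h1 : k • A = (k • (1 : Matrix (Fin n) (Fin n) ℝ)) * A := by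
    rw [Matrix.smul_mul, one_mul]
  have h2 : (k • (1 : Matrix (Fin n) (Fin n) ℝ))⁻¹ = k⁻¹ • 1 := by
    apply Matrix.inv_eq_right_inv
    rw [Matrix.smul_mul, Matrix.mul_smul, one_mul, smul_smul, mul_inv_cancel₀ hk,
      one_smul]
  rw [h1, Matrix.mul_inv_rev, h2, Matrix.mul_smul, mul_one]

/-- The regularized-SDP solution `(1/η)(L − λI)⁻¹` for the normalized Laplacian
equals the scaled-and-stretched PageRank matrix
`D^{-1/2} R_γ D^{1/2} / Tr(R_γ)`, with `γ = λ/(λ−1)` and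
`η = (1−γ) Tr((I − (1−γ) A D⁻¹)⁻¹)`. -/
theorem pagerank_sdp_solution_identity
    {n : ℕ} (A : Matrix (Fin n) (Fin n) ℝ)
    (hAsymm : A.IsSymm) (hAnonneg : ∀ i j, 0 ≤ A i j)
    (hconn : ∀ i j : Fin n, Relation.ReflTransGen (fun a b => 0 < A a b) i j)
    (d : Fin n → ℝ) (hd : ∀ i, d i = ∑ j, A i j) (hdpos : ∀ i, 0 < d i)
    (Dhalf DhalfInv L : Matrix (Fin n) (Fin n) ℝ)
    (hDhalf : Dhalf = Matrix.diagonal fun i => Real.sqrt (d i))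
    (hDhalfInv : DhalfInv = Matrix.diagonal fun i => (Real.sqrt (d i))⁻¹)
    (hL : L = 1 - DhalfInv * A * DhalfInv)
    (lam γ η : ℝ) (hlam : lam < 0)
    (hγ : γ = lam / (lam - 1))
    (hη : η = (1 - γ) * ((1 - (1 - γ) • (A * (Matrix.diagonal d)⁻¹))⁻¹).trace)
    (Rγ : Matrix (Fin n) (Fin n) ℝ)
    (hR : Rγ = γ • (1 - (1 - γ) • (A * (Matrix.diagonal d)⁻¹))⁻¹) :
    η⁻¹ • (L - lam • (1 : Matrix (Fin n) (Fin n) ℝ))⁻¹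
      = Rγ.trace⁻¹ • (DhalfInv * Rγ * Dhalf) := by
  have hlam1 : lam - 1 ≠ 0 := by linarith
  have h1lam : (1 : ℝ) - lam ≠ 0 := by linarith
  have hγ0 : γ ≠ 0 := by
    rw [hγ]; exact div_ne_zero (ne_of_lt hlam) hlam1
  have hγ1 : (1 : ℝ) - γ ≠ 0 := by
    rw [hγ]; field_simp
    rw [show lam - 1 - lam = -1 by ring]; exact div_ne_zero (by norm_num) hlam1
  have hγval : 1 - γ = (1 - lam)⁻¹ := by
    rw [hγ]; field_simp
    ring
  have hsqrt : ∀ i, Real.sqrt (d i) ≠ 0 :=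
    fun i => Real.sqrt_ne_zero'.2 (hdpos i)
  set M : Matrix (Fin n) (Fin n) ℝ :=
    1 - (1 - γ) • (A * (Matrix.diagonal d)⁻¹) with hM
  -- basic diagonal facts
  have hDinv : (Matrix.diagonal d)⁻¹ = Matrix.diagonal fun i => (d i)⁻¹ := by
    apply Matrix.inv_eq_right_inv
    rw [Matrix.diagonal_mul_diagonal,
      show (fun i => d i * (d i)⁻¹) = fun _ => (1 : ℝ) from
        funext fun i => mul_inv_cancel₀ (ne_of_gt (hdpos i)),
      Matrix.diagonal_one]
  have hIDh : DhalfInv * Dhalf = 1 := by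
    rw [hDhalf, hDhalfInv, Matrix.diagonal_mul_diagonal,
      show (fun i => (Real.sqrt (d i))⁻¹ * Real.sqrt (d i)) = fun _ => (1 : ℝ) from
        funext fun i => inv_mul_cancel₀ (hsqrt i),
      Matrix.diagonal_one]
  have hDdh : (Matrix.diagonal d)⁻¹ * Dhalf = DhalfInv := by
    rw [hDinv, hDhalf, hDhalfInv, Matrix.diagonal_mul_diagonal,
      show (fun i => (d i)⁻¹ * Real.sqrt (d i)) = fun i => (Real.sqrt (d i))⁻¹ from
        funext fun i => by
          rw [show (d i)⁻¹ = (Real.sqrt (d i))⁻¹ * (Real.sqrt (d i))⁻¹ by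
              rw [← mul_inv, Real.mul_self_sqrt (hdpos i).le],
            mul_assoc, inv_mul_cancel₀ (hsqrt i), mul_one]]
  -- conjugation identity
  have hconj : DhalfInv * M * Dhalf = 1 - (1 - γ) • (DhalfInv * A * DhalfInv) := by
    rw [hM, Matrix.mul_sub, Matrix.sub_mul, mul_one, hIDh, Matrix.mul_smul,
      Matrix.smul_mul]
    congr 2
    simp only [Matrix.mul_assoc]
    rw [hDdh]
  have hkey : L - lam • (1 : Matrix (Fin n) (Fin n) ℝ)
      = (1 - lam) • (DhalfInv * M * Dhalf) := by
    rw [hconj, hL, smul_sub, smul_smul, hγval, mul_inv_cancel₀ h1lam, one_smul,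
      sub_smul, one_smul]
    abel
  -- inverses of the diagonal matrices
  have hDhalfI : Dhalf⁻¹ = DhalfInv := by
    apply Matrix.inv_eq_right_inv
    rw [hDhalf, hDhalfInv, Matrix.diagonal_mul_diagonal,
      show (fun i => Real.sqrt (d i) * (Real.sqrt (d i))⁻¹) = fun _ => (1 : ℝ) from
        funext fun i => mul_inv_cancel₀ (hsqrt i),
      Matrix.diagonal_one]
  have hDhalfInvI : DhalfInv⁻¹ = Dhalf := by
    apply Matrix.inv_eq_right_inv
    rw [hDhalf, hDhalfInv, Matrix.diagonal_mul_diagonal,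
      show (fun i => (Real.sqrt (d i))⁻¹ * Real.sqrt (d i)) = fun _ => (1 : ℝ) from
        funext fun i => inv_mul_cancel₀ (hsqrt i),
      Matrix.diagonal_one]
  have hinv : (L - lam • (1 : Matrix (Fin n) (Fin n) ℝ))⁻¹
      = (1 - lam)⁻¹ • (DhalfInv * M⁻¹ * Dhalf) := by
    rw [hkey, matrix_smul_inv _ h1lam, Matrix.mul_inv_rev, Matrix.mul_inv_rev,
      hDhalfI, hDhalfInvI, Matrix.mul_assoc]
  set t : ℝ := (M⁻¹).trace with ht
  have hRt : Rγ.trace = γ * t := by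
    rw [hR, Matrix.trace_smul, ht, smul_eq_mul]
  have hRconj : DhalfInv * Rγ * Dhalf = γ • (DhalfInv * M⁻¹ * Dhalf) := by
    rw [hR, Matrix.mul_smul, Matrix.smul_mul]
  rw [hinv, hRt, hRconj, hη, smul_smul, smul_smul, ← hγval]
  congr 1
  rcases eq_or_ne t 0 with h | h
  · simp [h]
  · field_simp
end
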